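/- Let E be a topological graph and let n ≥ 1. Then the map r^n : E^n → E^0, r^n(μ) := r(μ_1), is continuous, and the map s^n : E^n → E^0, s^n(μ) := s(μ_n), is a local homeomorphism, so that E_n := (E^0, E^n, r^n, s^n) is again a topological graph. -/

import Mathlib

open Set Topology Filter

namespace TopGraphPaper

variable {V E : Type*}

/-- Compatibility condition defining a finite path. -/
def IsPath (r s : E → V) {n : ℕ} (μ : Fin n → E) : Prop :=
  ∀ (i : ℕ) (h : i + 1 < n), s (μ ⟨i, by omega⟩) = r (μ ⟨i + 1, h⟩)

/-- The space `E^n` of paths of length `n`, topologized as a subspace of `(E^1)^n`. -/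
abbrev PathSpace (r s : E → V) (n : ℕ) := {μ : Fin n → E // IsPath r s μ}

/-- The projection of a fiber product along a local homeomorphism is a local homeomorphism. -/
lemma pullback_isLocalHomeomorph {X Y Z : Type*} [TopologicalSpace X] [TopologicalSpace Y]
    [TopologicalSpace Z] {f : X → Z} {g : Y → Z}
    (hf : IsLocalHomeomorph f) (hg : Continuous g) :
    IsLocalHomeomorph (fun p : {p : X × Y // f p.1 = g p.2} => p.1.2) := by
  apply IsLocalHomeomorph.mk
  intro p
  obtain ⟨e, hpe, rfl⟩ := hf p.1.1
  classical
  refine ⟨{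
    toFun := fun q => q.1.2
    invFun := fun y =>
      if h : g y ∈ e.target then ⟨(e.symm (g y), y), by simp [e.right_inv h]⟩ else p
    source := {q | q.1.1 ∈ e.source}
    target := {y | g y ∈ e.target}
    map_source' := fun q hq => by
      show g q.1.2 ∈ e.target
      rw [← q.2]; exact e.map_source hq
    map_target' := fun y hy => by
      simp only [Set.mem_setOf_eq, dif_pos (show g y ∈ e.target from hy)]
      exact e.map_target hy
    left_inv' := fun q hq => by
      have hy : g q.1.2 ∈ e.target := by rw [← q.2]; exact e.map_source hq
      rw [dif_pos hy]
      apply Subtype.ext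
      apply Prod.ext
      · show e.symm (g q.1.2) = q.1.1
        rw [← q.2]; exact e.left_inv hq
      · rfl
    right_inv' := fun y hy => by
      rw [dif_pos (show g y ∈ e.target from hy)]
    open_source := by
      have : Continuous fun q : {p : X × Y // (e : X → Z) p.1 = g p.2} => q.1.1 :=
        continuous_fst.comp continuous_subtype_val
      exact e.open_source.preimage this
    open_target := e.open_target.preimage hg
    continuousOn_toFun :=
      (continuous_snd.comp continuous_subtype_val).continuousOn
    continuousOn_invFun := by
      rw [Topology.IsEmbedding.subtypeVal.isInducing.continuousOn_iff]
      have hc : ContinuousOn (fun y => ((e.symm (g y), y) : X × Y)) {y | g y ∈ e.target} :=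
        ((e.continuousOn_symm.comp hg.continuousOn fun y hy => hy).prodMk continuousOn_id)
      refine hc.congr fun y hy => ?_
      simp only [Function.comp_apply, dif_pos (show g y ∈ e.target from hy)]
  }, hpe, fun q _ => rfl⟩

/-- The space of paths of length 1 is homeomorphic to `E`. -/
def pathOneHomeomorph [TopologicalSpace V] [TopologicalSpace E] (r s : E → V) :
    PathSpace r s 1 ≃ₜ E where
  toFun μ := μ.1 0
  invFun e := ⟨fun _ => e, fun i h => by omega⟩
  left_inv μ := Subtype.ext (funext fun i => by rw [Subsingleton.elim (0 : Fin 1) i])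
  right_inv e := rfl
  continuous_toFun := (continuous_apply (0 : Fin 1)).comp continuous_subtype_val
  continuous_invFun := Continuous.subtype_mk (continuous_pi fun _ => continuous_id) _

/-- Splitting off the last edge of a path of length `n+2`. -/
def pathSnocHomeomorph [TopologicalSpace V] [TopologicalSpace E] (r s : E → V) (n : ℕ) :
    PathSpace r s (n + 2) ≃ₜ
      {p : PathSpace r s (n + 1) × E // s (p.1.1 (Fin.last n)) = r p.2} where
  toFun μ := ⟨(⟨fun i => μ.1 i.castSucc, fun i h => by
      have := μ.2 i (by omega)
      simpa using this⟩, μ.1 (Fin.last (n + 1))), by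
      have := μ.2 n (by omega)
      simpa [Fin.last] using this⟩
  invFun p := ⟨fun j => if h : (j : ℕ) < n + 1 then p.1.1.1 ⟨j, h⟩ else p.1.2, by
      intro i h
      have hi : i < n + 1 := by omega
      dsimp only
      rw [dif_pos (show ((⟨i, by omega⟩ : Fin (n + 2)) : ℕ) < n + 1 from hi)]
      by_cases h2 : i + 1 < n + 1
      · rw [dif_pos (show ((⟨i + 1, h⟩ : Fin (n + 2)) : ℕ) < n + 1 from h2)]
        exact p.1.1.2 i h2
      · rw [dif_neg (show ¬((⟨i + 1, h⟩ : Fin (n + 2)) : ℕ) < n + 1 from h2)]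
        have hin : i = n := by omega
        subst hin
        simpa [Fin.last] using p.2⟩
  left_inv μ := by
    apply Subtype.ext
    funext j
    show (if h : (j : ℕ) < n + 1 then μ.1 (Fin.castSucc ⟨j, h⟩) else μ.1 (Fin.last (n + 1))) =
      μ.1 j
    by_cases h : (j : ℕ) < n + 1
    · rw [dif_pos h]
      exact congrArg _ (Fin.ext rfl)
    · rw [dif_neg h]
      have hj : j = Fin.last (n + 1) := by
        have := j.isLt
        refine Fin.ext ?_
        simp only [Fin.last]
        omega
      rw [hj]
  right_inv p := by
    apply Subtype.ext
    apply Prod.ext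
    · apply Subtype.ext
      funext i
      have hi : ((i.castSucc : Fin (n + 2)) : ℕ) < n + 1 := i.isLt
      show (if h : ((i.castSucc : Fin (n + 2)) : ℕ) < n + 1
          then p.1.1.1 ⟨(i.castSucc : Fin (n + 2)), h⟩ else p.1.2) = p.1.1.1 i
      rw [dif_pos hi]
      exact congrArg _ (Fin.ext (by simp))
    · show (if h : ((Fin.last (n + 1) : Fin (n + 2)) : ℕ) < n + 1
          then p.1.1.1 ⟨(Fin.last (n + 1) : Fin (n + 2)), h⟩ else p.1.2) = p.1.2
      rw [dif_neg (by simp [Fin.last])]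
  continuous_toFun := by
    apply Continuous.subtype_mk
    apply Continuous.prodMk
    · apply Continuous.subtype_mk
      exact continuous_pi fun i => (continuous_apply _).comp continuous_subtype_val
    · exact (continuous_apply _).comp continuous_subtype_val
  continuous_invFun := by
    apply Continuous.subtype_mk
    apply continuous_pi
    intro j
    by_cases h : (j : ℕ) < n + 1
    · simp only [dif_pos h]
      exact (continuous_apply _).comp
        (continuous_subtype_val.comp (continuous_fst.comp continuous_subtype_val))
    · simp only [dif_neg h]
      exact continuous_snd.comp continuous_subtype_val

lemma sLast_isLocalHomeomorph [TopologicalSpace V] [TopologicalSpace E] (r s : E → V)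
    (hr : Continuous r) (hs : IsLocalHomeomorph s) :
    ∀ n : ℕ, IsLocalHomeomorph (fun μ : PathSpace r s (n + 1) => s (μ.1 (Fin.last n))) := by
  intro n
  induction n with
  | zero =>
      have := hs.comp (pathOneHomeomorph r s).isLocalHomeomorph
      exact this
  | succ n ih =>
      have hproj := pullback_isLocalHomeomorph
        (f := fun μ : PathSpace r s (n + 1) => s (μ.1 (Fin.last n))) (g := r) ih hr
      have := (hs.comp hproj).comp (pathSnocHomeomorph r s n).isLocalHomeomorph
      exact this

/-- For `n ≥ 1`, the range map `r^n(μ) = r(μ₁)` on `E^n` is continuous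
and the source map `s^n(μ) = s(μ_n)` is a local homeomorphism, so that
`E_n = (E^0, E^n, r^n, s^n)` is again a topological graph. -/
theorem path_space_is_topological_graph
    [TopologicalSpace V] [TopologicalSpace E]
    [LocallyCompactSpace V] [T2Space V] [LocallyCompactSpace E] [T2Space E]
    (r s : E → V) (hr : Continuous r) (hs : IsLocalHomeomorph s) (n : ℕ) :
    Continuous (fun μ : PathSpace r s (n + 1) => r (μ.1 0)) ∧
    IsLocalHomeomorph (fun μ : PathSpace r s (n + 1) => s (μ.1 (Fin.last n))) ∧
    LocallyCompactSpace (PathSpace r s (n + 1)) ∧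
    T2Space (PathSpace r s (n + 1)) := by
  refine ⟨hr.comp ((continuous_apply _).comp continuous_subtype_val),
    sLast_isLocalHomeomorph r s hr hs n, ?_, ?_⟩
  · have hclosed : IsClosed {μ : Fin (n + 1) → E | IsPath r s μ} := by
      have heq : {μ : Fin (n + 1) → E | IsPath r s μ} =
          ⋂ (i : ℕ) (h : i + 1 < n + 1),
            {μ : Fin (n + 1) → E | s (μ ⟨i, by omega⟩) = r (μ ⟨i + 1, h⟩)} := by
        ext μ
        simp only [Set.mem_setOf_eq, Set.mem_iInter]
        exact ⟨fun h i hi => h i hi, fun h i hi => h i hi⟩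
      rw [heq]
      exact isClosed_iInter fun i => isClosed_iInter fun h =>
        isClosed_eq (hs.continuous.comp (continuous_apply _))
          (hr.comp (continuous_apply _))
    exact hclosed.locallyCompactSpace
  · infer_instance

end TopGraphPaper
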